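/- For every fixed integer k ≥ 1, the edge and triangle sufficient statistics of the k-degeneracy-restricted model are stable: both (max over k-degenerate simple graphs G on n vertices of the number of edges of G) / log S_k(n) and (max over k-degenerate simple graphs G on n vertices of the number of triangles of G) / log S_k(n) tend to 0 as n → ∞. -/

import Mathlib

open Filter

/-- A simple graph `G` is `k`-degenerate if every nonempty induced subgraph has a
vertex of degree at most `k`: for every nonempty finite set `S` of vertices there is
a vertex `v ∈ S` adjacent to at most `k` other vertices of `S`. -/
def IsKDegenerate {V : Type*} (k : ℕ) (G : SimpleGraph V) : Prop :=
  ∀ S : Finset V, S.Nonempty → ∃ v ∈ S, {w ∈ (S : Set V) | G.Adj v w}.ncard ≤ k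

/-- `numKDegenerate k n` (denoted `S_k(n)` in the paper) is the number of
`k`-degenerate simple graphs on the labeled vertex set `Fin n`. -/
noncomputable def numKDegenerate (k n : ℕ) : ℕ :=
  Nat.card {G : SimpleGraph (Fin n) // IsKDegenerate k G}

/-- The number of triangles of a graph: the number of 3-element vertex sets that are
pairwise adjacent (3-cliques). -/
noncomputable def triangleCount {V : Type*} (G : SimpleGraph V) : ℕ :=
  {s : Finset V | G.IsNClique 3 s}.ncard

/-- The maximum number of edges of a `k`-degenerate graph on `Fin n`. -/
noncomputable def maxEdges (k n : ℕ) : ℕ :=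
  sSup {m : ℕ | ∃ G : SimpleGraph (Fin n), IsKDegenerate k G ∧ G.edgeSet.ncard = m}

/-- The maximum number of triangles of a `k`-degenerate graph on `Fin n`. -/
noncomputable def maxTriangles (k n : ℕ) : ℕ :=
  sSup {m : ℕ | ∃ G : SimpleGraph (Fin n), IsKDegenerate k G ∧ triangleCount G = m}


lemma clique_bound {n k m : ℕ} {G : SimpleGraph (Fin n)}
    (hG : ∀ S : Finset (Fin n), S.Nonempty → ∃ v ∈ S, {w ∈ (S : Set (Fin n)) | G.Adj v w}.ncard ≤ k)
    (S : Finset (Fin n)) :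
    {s : Finset (Fin n) | s ⊆ S ∧ G.IsNClique (m + 1) s}.ncard ≤ k ^ m * S.card := by
  classical
  induction S using Finset.strongInduction with
  | _ S ih =>
    rcases S.eq_empty_or_nonempty with rfl | hSne
    · convert Nat.zero_le _
      rw [Set.ncard_eq_zero]
      ext s
      simp only [Set.mem_empty_iff_false, Set.mem_setOf_eq, iff_false, not_and]
      intro hs hcl
      rw [Finset.subset_empty] at hs
      subst hs
      simpa using hcl.card_eq
    · obtain ⟨v, hv, hdeg⟩ := hG S hSne
      set N : Finset (Fin n) := S.filter (fun w => G.Adj v w) with hNdef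
      have hN : N.card ≤ k := by
        have : {w ∈ (S : Set (Fin n)) | G.Adj v w} = ↑N := by
          ext w; simp [hNdef]
        rwa [this, Set.ncard_coe_finset] at hdeg
      set A := {s : Finset (Fin n) | s ⊆ S ∧ G.IsNClique (m + 1) s} with hA
      have hsplit : A ⊆ {s ∈ A | v ∉ s} ∪ {s ∈ A | v ∈ s} := by
        intro s hs
        by_cases h : v ∈ s
        · exact Or.inr ⟨hs, h⟩
        · exact Or.inl ⟨hs, h⟩
      have h1 : {s ∈ A | v ∉ s}.ncard ≤ k ^ m * (S.erase v).card := by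
        refine le_trans (Set.ncard_le_ncard ?_ (Set.toFinite _)) (ih (S.erase v) (Finset.erase_ssubset hv))
        rintro s ⟨⟨hsS, hscl⟩, hvs⟩
        exact ⟨Finset.subset_erase.2 ⟨hsS, hvs⟩, hscl⟩
      have h2 : {s ∈ A | v ∈ s}.ncard ≤ k ^ m := by
        have hinj : {s ∈ A | v ∈ s}.ncard ≤ (↑(N.powersetCard m) : Set (Finset (Fin n))).ncard := by
          refine Set.ncard_le_ncard_of_injOn (fun s => s.erase v) ?_ ?_ (Set.toFinite _)
          · rintro s ⟨⟨hsS, hscl⟩, hvs⟩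
            simp only [Finset.mem_coe, Finset.mem_powersetCard]
            refine ⟨fun w hw => ?_, by
              rw [Finset.card_erase_of_mem hvs, hscl.card_eq, Nat.add_sub_cancel]⟩
            rw [Finset.mem_erase] at hw
            exact Finset.mem_filter.2 ⟨hsS hw.2, hscl.isClique hvs hw.2 (Ne.symm hw.1)⟩
          · rintro s₁ ⟨_, hv1⟩ s₂ ⟨_, hv2⟩ h
            rw [← Finset.insert_erase hv1, ← Finset.insert_erase hv2]
            exact congrArg (insert v) h
        rw [Set.ncard_coe_finset, Finset.card_powersetCard] at hinj
        exact hinj.trans ((Nat.choose_le_pow _ _).trans (Nat.pow_le_pow_left hN m))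
      have hc1 : 1 ≤ S.card := Finset.card_pos.2 hSne
      calc A.ncard ≤ ({s ∈ A | v ∉ s} ∪ {s ∈ A | v ∈ s}).ncard :=
            Set.ncard_le_ncard hsplit (Set.toFinite _)
        _ ≤ {s ∈ A | v ∉ s}.ncard + {s ∈ A | v ∈ s}.ncard := Set.ncard_union_le _ _
        _ ≤ k ^ m * (S.erase v).card + k ^ m := Nat.add_le_add h1 h2
        _ = k ^ m * S.card := by
            rw [Finset.card_erase_of_mem hv, Nat.mul_sub, mul_one,
              Nat.sub_add_cancel (Nat.le_mul_of_pos_right _ hc1)]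

lemma tri_bound {n k : ℕ} {G : SimpleGraph (Fin n)} (hG : IsKDegenerate k G) :
    triangleCount G ≤ k ^ 2 * n := by
  have h := clique_bound (m := 2) hG Finset.univ
  rw [Finset.card_univ, Fintype.card_fin] at h
  have he : {s : Finset (Fin n) | G.IsNClique 3 s}
      = {s : Finset (Fin n) | s ⊆ Finset.univ ∧ G.IsNClique 3 s} := by
    ext s; simp [Finset.subset_univ]
  rw [triangleCount, he]; exact h

lemma edge_bound {n k : ℕ} {G : SimpleGraph (Fin n)} (hG : IsKDegenerate k G) :
    G.edgeSet.ncard ≤ k * n := by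
  classical
  have h := clique_bound (m := 1) hG Finset.univ
  rw [Finset.card_univ, Fintype.card_fin, pow_one] at h
  refine le_trans ?_ h
  refine Set.ncard_le_ncard_of_injOn
    (fun e => Sym2.lift ⟨fun a b => ({a, b} : Finset (Fin n)), fun a b => Finset.pair_comm a b⟩ e)
    ?_ ?_ (Set.toFinite _)
  · intro e he
    induction e with
    | _ a b =>
      rw [SimpleGraph.mem_edgeSet] at he
      simp only [Sym2.lift_mk, Set.mem_setOf_eq]
      refine ⟨Finset.subset_univ _, ?_, ?_⟩
      · rw [Finset.coe_insert, Finset.coe_singleton]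
        exact Set.pairwise_pair.2 fun _ => ⟨he, he.symm⟩
      · exact Finset.card_pair he.ne
  · intro e₁ h₁ e₂ h₂ hP
    induction e₁ with
    | _ a b =>
      induction e₂ with
      | _ c d =>
        rw [SimpleGraph.mem_edgeSet] at h₁ h₂
        simp only [Sym2.lift_mk] at hP
        have had : a = c ∨ a = d := by
          have := Finset.ext_iff.1 hP a
          simpa using this.1 (by simp)
        have hbd : b = c ∨ b = d := by
          have := Finset.ext_iff.1 hP b
          simpa using this.1 (by simp)
        have hab : a ≠ b := h₁.ne
        rw [Sym2.eq_iff]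
        rcases had with rfl | rfl <;> rcases hbd with rfl | rfl <;> tauto

lemma bot_isKDegenerate (k n : ℕ) : IsKDegenerate k (⊥ : SimpleGraph (Fin n)) := by
  intro S hS
  obtain ⟨v, hv⟩ := hS
  refine ⟨v, hv, ?_⟩
  have : {w ∈ (S : Set (Fin n)) | (⊥ : SimpleGraph (Fin n)).Adj v w} = ∅ := by
    ext w; simp
  rw [this, Set.ncard_empty]
  exact Nat.zero_le k

lemma maxEdges_le (k n : ℕ) : maxEdges k n ≤ k * n := by
  refine csSup_le ⟨(⊥ : SimpleGraph (Fin n)).edgeSet.ncard, ⊥, bot_isKDegenerate k n, rfl⟩ ?_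
  rintro m ⟨G, hG, rfl⟩
  exact edge_bound hG

lemma maxTriangles_le (k n : ℕ) : maxTriangles k n ≤ k ^ 2 * n := by
  refine csSup_le ⟨triangleCount (⊥ : SimpleGraph (Fin n)), ⊥, bot_isKDegenerate k n, rfl⟩ ?_
  rintro m ⟨G, hG, rfl⟩
  exact tri_bound hG


lemma numKDegenerate_lower (k n : ℕ) (hk : 1 ≤ k) (hn : 2 ≤ n) :
    (n / 2) ^ (n - n / 2) ≤ numKDegenerate k n := by
  classical
  set m := n / 2 with hmdef
  have hm1 : 1 ≤ m := by omega
  have hmn : m < n := by omega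
  -- the graph associated to f
  let Gr : (Fin (n - m) → Fin m) → SimpleGraph (Fin n) := fun f =>
    SimpleGraph.fromRel (fun x y => ∃ i : Fin (n - m), x.val = m + i.val ∧ y.val = (f i).val)
  have hdeg : ∀ f, IsKDegenerate k (Gr f) := by
    intro f S hSne
    by_cases hS : ∃ v ∈ S, m ≤ v.val
    · obtain ⟨v, hvS, hvm⟩ := hS
      refine ⟨v, hvS, ?_⟩
      have hi₀ : v.val - m < n - m := by omega
      set i₀ : Fin (n - m) := ⟨v.val - m, hi₀⟩ with hi₀def
      have hw₀ : (f i₀).val < n := lt_of_lt_of_le (f i₀).isLt (le_of_lt hmn)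
      have hsub : {w ∈ (S : Set (Fin n)) | (Gr f).Adj v w} ⊆ {(⟨(f i₀).val, hw₀⟩ : Fin n)} := by
        rintro w ⟨hwS, hadj⟩
        rw [SimpleGraph.fromRel_adj] at hadj
        obtain ⟨hne, hr | hr⟩ := hadj
        · obtain ⟨i, hv1, hw1⟩ := hr
          have hival : i₀.val = v.val - m := rfl
          have : i = i₀ := Fin.ext (by omega)
          subst this
          exact Set.mem_singleton_iff.2 (Fin.ext hw1)
        · obtain ⟨i, hw1, hv1⟩ := hr
          exact absurd hv1 (by have := (f i).isLt; omega)
      calc {w ∈ (S : Set (Fin n)) | (Gr f).Adj v w}.ncard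
          ≤ ({(⟨(f i₀).val, hw₀⟩ : Fin n)} : Set (Fin n)).ncard :=
            Set.ncard_le_ncard hsub (Set.finite_singleton _)
        _ = 1 := Set.ncard_singleton _
        _ ≤ k := hk
    · push_neg at hS
      obtain ⟨v, hvS⟩ := hSne
      refine ⟨v, hvS, ?_⟩
      have : {w ∈ (S : Set (Fin n)) | (Gr f).Adj v w} = ∅ := by
        rw [Set.eq_empty_iff_forall_notMem]
        rintro w ⟨hwS, hadj⟩
        rw [SimpleGraph.fromRel_adj] at hadj
        obtain ⟨hne, hr | hr⟩ := hadj
        · obtain ⟨i, hv1, -⟩ := hr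
          exact absurd hv1 (by have := hS v hvS; omega)
        · obtain ⟨i, hw1, -⟩ := hr
          exact absurd hw1 (by have := hS w hwS; omega)
      rw [this, Set.ncard_empty]
      exact Nat.zero_le k
  let F : (Fin (n - m) → Fin m) → {G : SimpleGraph (Fin n) // IsKDegenerate k G} :=
    fun f => ⟨Gr f, hdeg f⟩
  have hinj : Function.Injective F := by
    intro f g h
    have hG : Gr f = Gr g := congrArg Subtype.val h
    funext i
    have hup : m + i.val < n := by omega
    have hlow : (f i).val < n := lt_of_lt_of_le (f i).isLt (le_of_lt hmn)
    have hadj : (Gr f).Adj ⟨m + i.val, hup⟩ ⟨(f i).val, hlow⟩ := by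
      rw [SimpleGraph.fromRel_adj]
      refine ⟨fun hh => ?_, Or.inl ⟨i, rfl, rfl⟩⟩
      rw [Fin.mk.injEq] at hh
      have := (f i).isLt
      omega
    rw [hG, SimpleGraph.fromRel_adj] at hadj
    obtain ⟨-, hr | hr⟩ := hadj
    · obtain ⟨j, hj1, hj2⟩ := hr
      have hj1' : m + i.val = m + j.val := hj1
      have hji : j = i := Fin.ext (by omega)
      rw [hji] at hj2
      exact Fin.ext hj2
    · obtain ⟨j, hj1, -⟩ := hr
      have hj1' : (f i).val = m + j.val := hj1
      have := (f i).isLt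
      omega
  have := Nat.card_le_card_of_injective F hinj
  rwa [Nat.card_fun, Nat.card_eq_fintype_card, Nat.card_eq_fintype_card,
    Fintype.card_fin, Fintype.card_fin] at this


lemma key (k : ℕ) (hk : 1 ≤ k) (C : ℕ) (f : ℕ → ℕ) (hf : ∀ n, f n ≤ C * n) :
    Tendsto (fun n : ℕ => (f n : ℝ) / Real.log (numKDegenerate k n)) atTop (nhds 0) := by
  have hq : Tendsto (fun n : ℕ => (n : ℝ) / 4) atTop atTop :=
    Tendsto.atTop_div_const (by norm_num) tendsto_natCast_atTop_atTop
  have hh : Tendsto (fun n : ℕ => (4 * C : ℝ) / Real.log ((n : ℝ) / 4)) atTop (nhds 0) :=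
    Tendsto.div_atTop tendsto_const_nhds (Real.tendsto_log_atTop.comp hq)
  refine tendsto_of_tendsto_of_tendsto_of_le_of_le' tendsto_const_nhds hh ?_ ?_
  · exact Eventually.of_forall fun n => div_nonneg (Nat.cast_nonneg _) (Real.log_natCast_nonneg _)
  · filter_upwards [eventually_ge_atTop 8] with n hn
    set m := n / 2 with hm
    have hmn : m ≤ n := by omega
    have hcast : ((n - m : ℕ) : ℝ) = (n : ℝ) - m := by
      rw [Nat.cast_sub hmn]
    have hm4 : (n : ℝ) / 4 ≤ (m : ℝ) := by
      have h1 : n ≤ 2 * m + 1 := by omega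
      have h1' : (n : ℝ) ≤ 2 * m + 1 := by exact_mod_cast h1
      have h2 : (1 : ℝ) ≤ m := by exact_mod_cast (by omega : 1 ≤ m)
      linarith
    have hnm4 : (n : ℝ) / 4 ≤ ((n - m : ℕ) : ℝ) := by
      have h2 : 2 * m ≤ n := by omega
      have h2' : 2 * (m : ℝ) ≤ n := by exact_mod_cast h2
      rw [hcast]; linarith
    have hlogn4 : (0 : ℝ) < Real.log ((n : ℝ) / 4) := by
      apply Real.log_pos
      have : (8 : ℝ) ≤ n := by exact_mod_cast hn
      linarith
    have hn4pos : (0 : ℝ) < (n : ℝ) / 4 := by positivity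
    have hlogm : Real.log ((n : ℝ) / 4) ≤ Real.log m := Real.log_le_log hn4pos hm4
    have hmpos : (0 : ℝ) < (m : ℝ) := lt_of_lt_of_le hn4pos hm4
    have hlb : ((m : ℝ) ^ (n - m)) ≤ (numKDegenerate k n : ℝ) := by
      exact_mod_cast numKDegenerate_lower k n hk (by omega)
    have hLlog : ((n - m : ℕ) : ℝ) * Real.log m ≤ Real.log (numKDegenerate k n) := by
      calc ((n - m : ℕ) : ℝ) * Real.log m = Real.log ((m : ℝ) ^ (n - m)) := (Real.log_pow _ _).symm
        _ ≤ _ := Real.log_le_log (by positivity) hlb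
    have hLge : (n : ℝ) / 4 * Real.log ((n : ℝ) / 4) ≤ Real.log (numKDegenerate k n) := by
      refine le_trans ?_ hLlog
      exact mul_le_mul hnm4 hlogm (le_of_lt hlogn4) (by positivity)
    have hfle : (f n : ℝ) ≤ (C : ℝ) * n := by exact_mod_cast hf n
    have hdenpos : (0 : ℝ) < (n : ℝ) / 4 * Real.log ((n : ℝ) / 4) := mul_pos hn4pos hlogn4
    calc (f n : ℝ) / Real.log (numKDegenerate k n)
        ≤ ((C : ℝ) * n) / ((n : ℝ) / 4 * Real.log ((n : ℝ) / 4)) :=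
          div_le_div₀ (by positivity) hfle hdenpos hLge
      _ = (4 * C : ℝ) / Real.log ((n : ℝ) / 4) := by
          rw [div_eq_div_iff hdenpos.ne' hlogn4.ne']; ring

/-- Stability of the edge and triangle statistics of the `k`-degeneracy-restricted
model (Proposition 2 together with Theorem 1): for fixed `k ≥ 1`, both
`max e(g) / log S_k(n)` and `max △(g) / log S_k(n)` tend to `0` as `n → ∞`. -/
theorem edge_triangle_statistics_stable (k : ℕ) (hk : 1 ≤ k) :
    Tendsto (fun n : ℕ => (maxEdges k n : ℝ) / Real.log (numKDegenerate k n))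
        atTop (nhds 0) ∧
      Tendsto (fun n : ℕ => (maxTriangles k n : ℝ) / Real.log (numKDegenerate k n))
        atTop (nhds 0) := by
  exact ⟨key k hk k (fun n => maxEdges k n) (fun n => maxEdges_le k n),
    key k hk (k ^ 2) (fun n => maxTriangles k n) (fun n => maxTriangles_le k n)⟩
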